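/- For 0 < q < 1, ∑_{n=1}^∞ 1/sinh²(nx) = -4 q · d/dq (log ∏_{k=1}^∞ (1 - q^k)), where q = e^{-2x}. -/

import Mathlib

open Real


-- bound on |log(1-t)|
private lemma aux_abs_log_one_sub {t r : ℝ} (ht : |t| ≤ r) (hr : r < 1) :
    |Real.log (1 - t)| ≤ |t| / (1 - r) := by
  have h1 : t < 1 := lt_of_le_of_lt (le_trans (le_abs_self t) ht) hr
  have h2 : (0:ℝ) < 1 - t := by linarith
  have h3 : (0:ℝ) < 1 - r := by linarith
  have habs : -t ≤ |t| := neg_le_abs t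
  have htr : 1 - r ≤ 1 - t := by
    have := le_trans (le_abs_self t) ht; linarith
  rw [abs_le]
  constructor
  · have h5 := Real.log_le_sub_one_of_pos (x := (1-t)⁻¹) (by positivity)
    rw [Real.log_inv] at h5
    have h4 : (1-t)⁻¹ - 1 = t / (1 - t) := by field_simp; ring
    rw [h4] at h5
    have h6 : t / (1 - t) ≤ |t| / (1 - r) :=
      div_le_div₀ (abs_nonneg t) (le_abs_self t) h3 htr
    linarith
  · have h5 := Real.log_le_sub_one_of_pos h2
    have h6 : |t| ≤ |t| / (1 - r) := by
      rw [le_div_iff₀ h3]; nlinarith [abs_nonneg t]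
    linarith

private lemma aux_summable_log {p r : ℝ} (hp : |p| ≤ r) (hr0 : 0 ≤ r) (hr : r < 1) :
    Summable fun n : ℕ => Real.log (1 - p ^ (n + 1)) := by
  apply Summable.of_abs
  refine Summable.of_nonneg_of_le (fun n => abs_nonneg _) (fun n => ?_)
    (((summable_geometric_of_lt_one hr0 hr).mul_left (r / (1 - r))).congr
      (fun n => ?_) : Summable fun n : ℕ => r ^ (n + 1) / (1 - r))
  · have hpn : |p ^ (n+1)| ≤ r := by
      rw [abs_pow]
      calc |p| ^ (n+1) ≤ r ^ (n+1) := pow_le_pow_left₀ (abs_nonneg p) hp _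
        _ ≤ r ^ 1 := pow_le_pow_of_le_one hr0 hr.le (by omega)
        _ = r := pow_one r
    have := aux_abs_log_one_sub hpn hr
    refine this.trans ?_
    rw [abs_pow]
    have : |p| ^ (n+1) ≤ r ^ (n+1) := pow_le_pow_left₀ (abs_nonneg p) hp _
    have h3 : (0:ℝ) < 1 - r := by linarith
    exact div_le_div₀ (by positivity) this h3 le_rfl
  · ring

private lemma aux_pos {p r : ℝ} (hp : |p| ≤ r) (hr0 : 0 ≤ r) (hr : r < 1) (n : ℕ) :
    0 < 1 - p ^ (n + 1) := by
  have hpn : p ^ (n+1) < 1 := by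
    calc p ^ (n+1) ≤ |p ^ (n+1)| := le_abs_self _
      _ ≤ r := by
        rw [abs_pow]
        calc |p| ^ (n+1) ≤ r ^ (n+1) := pow_le_pow_left₀ (abs_nonneg p) hp _
          _ ≤ r ^ 1 := pow_le_pow_of_le_one hr0 hr.le (by omega)
          _ = r := pow_one r
      _ < 1 := hr
  linarith

private lemma aux_log_tprod {p r : ℝ} (hp : |p| ≤ r) (hr0 : 0 ≤ r) (hr : r < 1) :
    Real.log (∏' k : ℕ, (1 - p ^ (k + 1))) = ∑' k : ℕ, Real.log (1 - p ^ (k + 1)) := by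
  have hs := aux_summable_log hp hr0 hr
  have hprod : HasProd (fun k : ℕ => 1 - p ^ (k+1))
      (Real.exp (∑' k : ℕ, Real.log (1 - p ^ (k+1)))) := by
    have h1 := hs.hasSum.rexp
    have h2 : (rexp ∘ fun k : ℕ => Real.log (1 - p ^ (k+1))) = fun k : ℕ => 1 - p ^ (k+1) :=
      funext fun k => Real.exp_log (aux_pos hp hr0 hr k)
    rwa [h2] at h1
  rw [hprod.tprod_eq, Real.log_exp]

private lemma aux_hasDerivAt (n : ℕ) {p : ℝ} (hp : 1 - p ^ (n+1) ≠ 0) :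
    HasDerivAt (fun y : ℝ => Real.log (1 - y ^ (n + 1)))
      ((-(((n:ℝ)+1) * p ^ n)) / (1 - p ^ (n+1))) p := by
  have h1 : HasDerivAt (fun y : ℝ => 1 - y ^ (n+1)) (-(((n:ℝ)+1) * p ^ n)) p := by
    have := (hasDerivAt_pow (n+1) p).const_sub 1
    refine this.congr_deriv ?_
    push_cast
    simp
  exact h1.log hp

-- derivative of the log-sum at q
private lemma aux_deriv_sum {q : ℝ} (hq0 : 0 < q) (hq1 : q < 1) :
    HasDerivAt (fun y : ℝ => ∑' n : ℕ, Real.log (1 - y ^ (n + 1)))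
      (∑' n : ℕ, (-(((n:ℝ)+1) * q ^ n)) / (1 - q ^ (n+1))) q := by
  set r : ℝ := (1 + q) / 2 with hr
  have hr0 : 0 < r := by positivity
  have hr1 : r < 1 := by rw [hr]; linarith
  have hqr : q < r := by rw [hr]; linarith
  have hu : Summable fun n : ℕ => ((n:ℝ)+1) * r ^ n / (1 - r) := by
    apply Summable.div_const
    have h1 : Summable fun n : ℕ => (n:ℝ) * r ^ n :=
      ⟨_, hasSum_coe_mul_geometric_of_norm_lt_one (by rw [Real.norm_eq_abs, abs_of_pos hr0]; exact hr1)⟩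
    have h2 : Summable fun n : ℕ => r ^ n := summable_geometric_of_lt_one hr0.le hr1
    exact (h1.add h2).congr fun n => by ring
  have hmem : ∀ p ∈ Set.Ioo (-r) r, |p| ≤ r := fun p hp => (abs_lt.mpr ⟨hp.1, hp.2⟩).le
  refine hasDerivAt_tsum_of_isPreconnected hu isOpen_Ioo (convex_Ioo _ _).isPreconnected
    (fun n p hp => aux_hasDerivAt n (ne_of_gt ?_)) (fun n p hp => ?_)
    (show q ∈ Set.Ioo (-r) r from ⟨by linarith, hqr⟩) ?_ (show q ∈ Set.Ioo (-r) r from ⟨by linarith, hqr⟩)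
  · exact aux_pos (hmem p hp) hr0.le hr1 n
  · have hpr := hmem p hp
    have hpos := aux_pos (hmem p hp) hr0.le hr1 n
    rw [Real.norm_eq_abs, abs_div, abs_neg, abs_mul, abs_of_pos hpos]
    have h1 : |((n:ℝ)+1)| = (n:ℝ)+1 := abs_of_pos (by positivity)
    rw [h1, abs_pow]
    have h2 : 1 - r ≤ 1 - p ^ (n+1) := by
      have : p ^ (n+1) ≤ r := by
        calc p ^ (n+1) ≤ |p ^ (n+1)| := le_abs_self _
          _ ≤ r := by
            rw [abs_pow]
            calc |p| ^ (n+1) ≤ r ^ (n+1) := pow_le_pow_left₀ (abs_nonneg p) hpr _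
              _ ≤ r ^ 1 := pow_le_pow_of_le_one hr0.le hr1.le (by omega)
              _ = r := pow_one r
      linarith
    have h3 : ((n:ℝ)+1) * |p| ^ n ≤ ((n:ℝ)+1) * r ^ n := by
      have := pow_le_pow_left₀ (abs_nonneg p) hpr n
      nlinarith [pow_nonneg (abs_nonneg p) n]
    exact div_le_div₀ (by positivity) h3 (by linarith) h2
  · exact aux_summable_log (by rw [abs_of_pos hq0]; exact hqr.le) hr0.le hr1
private lemma aux_inner1 {q : ℝ} (hq0 : 0 < q) (hq1 : q < 1) (m : ℕ) :
    HasSum (fun d : ℕ => ((d:ℝ)+1) * q ^ ((m+1)*(d+1)))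
      (q ^ (m+1) / (1 - q ^ (m+1)) ^ 2) := by
  set t : ℝ := q ^ (m+1) with ht
  have ht0 : 0 < t := by positivity
  have ht1 : t < 1 := pow_lt_one₀ hq0.le hq1 (by omega)
  have hbase := hasSum_coe_mul_geometric_of_norm_lt_one
    (r := t) (by rw [Real.norm_eq_abs, abs_of_pos ht0]; exact ht1)
  have hshift : HasSum (fun d : ℕ => (((d+1 : ℕ)) : ℝ) * t ^ (d+1)) (t / (1 - t) ^ 2) := by
    refine (hasSum_nat_add_iff (f := fun d : ℕ => ((d:ℕ):ℝ) * t ^ d) 1).mpr ?_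
    simpa using hbase
  have hfun : (fun d : ℕ => ((d:ℝ)+1) * q ^ ((m+1)*(d+1)))
      = fun d : ℕ => (((d+1 : ℕ)) : ℝ) * t ^ (d+1) := by
    funext d
    rw [ht, ← pow_mul]
    push_cast
    ring
  rw [hfun]
  exact hshift

private lemma aux_inner2 {q : ℝ} (hq0 : 0 < q) (hq1 : q < 1) (k : ℕ) :
    HasSum (fun d : ℕ => ((k:ℝ)+1) * q ^ ((d+1)*(k+1)))
      (((k:ℝ)+1) * q ^ (k+1) / (1 - q ^ (k+1))) := by
  set t : ℝ := q ^ (k+1) with ht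
  have ht0 : 0 < t := by positivity
  have ht1 : t < 1 := pow_lt_one₀ hq0.le hq1 (by omega)
  have hgeo : HasSum (fun d : ℕ => t ^ d) (1 - t)⁻¹ := hasSum_geometric_of_lt_one ht0.le ht1
  have h2 : HasSum (fun d : ℕ => ((k:ℝ)+1) * t * t ^ d) (((k:ℝ)+1) * t * (1 - t)⁻¹) :=
    hgeo.mul_left _
  have hfun : (fun d : ℕ => ((k:ℝ)+1) * q ^ ((d+1)*(k+1)))
      = fun d : ℕ => ((k:ℝ)+1) * t * t ^ d := by
    funext d
    rw [ht, ← pow_mul]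
    have : (d+1)*(k+1) = (k+1) + (k+1)*d := by ring
    rw [this, pow_add, pow_mul]
    ring
  rw [hfun]
  convert h2 using 1
  ring

private lemma aux_summable_F {q : ℝ} (hq0 : 0 < q) (hq1 : q < 1) :
    Summable (Function.uncurry fun m d : ℕ => ((d:ℝ)+1) * q ^ ((m+1)*(d+1))) := by
  have hg : Summable fun d : ℕ => ((d:ℝ)+1) * q ^ (d+1) :=
    (aux_inner1 hq0 hq1 0).summable.congr fun d => by norm_num
  have hf : Summable fun m : ℕ => q ^ m := summable_geometric_of_lt_one hq0.le hq1
  have hbig := hf.mul_of_nonneg hg (fun m => by positivity) (fun d => by positivity)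
  refine Summable.of_nonneg_of_le (fun x => by simp only [Function.uncurry]; positivity) (fun x => ?_) hbig
  obtain ⟨m, d⟩ := x
  simp only [Function.uncurry]
  have hexp : (m+1)*(d+1) = (m + (d+1)) + m*d := by ring
  have h1 : q ^ ((m+1)*(d+1)) ≤ q ^ (m + (d+1)) := by
    rw [hexp]
    calc q ^ ((m + (d+1)) + m*d) = q ^ (m+(d+1)) * q ^ (m*d) := pow_add q _ _
      _ ≤ q ^ (m+(d+1)) * 1 := by
          have := pow_le_one₀ hq0.le hq1.le (n := m*d)
          nlinarith [pow_pos hq0 (m+(d+1))]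
      _ = q ^ (m+(d+1)) := mul_one _
  calc ((d:ℝ)+1) * q ^ ((m+1)*(d+1)) ≤ ((d:ℝ)+1) * q ^ (m+(d+1)) := by nlinarith [pow_pos hq0 ((m+1)*(d+1))]
    _ = q ^ m * (((d:ℝ)+1) * q ^ (d+1)) := by rw [pow_add]; ring
theorem sinh_sq_series_eta (x : ℝ) (hx : 0 < x) (q : ℝ) (hq : q = Real.exp (-2 * x)) :
    ∑' n : ℕ, 1 / Real.sinh (((n : ℝ) + 1) * x) ^ 2 =
      -4 * q * deriv (fun p : ℝ => Real.log (∏' k : ℕ, (1 - p ^ (k + 1)))) q := by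
  have hq0 : 0 < q := hq ▸ Real.exp_pos _
  have hq1 : q < 1 := by rw [hq]; exact Real.exp_lt_one_iff.mpr (by linarith)
  set r : ℝ := (1 + q) / 2 with hr
  have hr0 : 0 < r := by positivity
  have hr1 : r < 1 := by rw [hr]; linarith
  have hqr : q < r := by rw [hr]; linarith
  -- the derivative
  have hEq : (fun p : ℝ => Real.log (∏' k : ℕ, (1 - p ^ (k + 1))))
      =ᶠ[nhds q] fun p : ℝ => ∑' k : ℕ, Real.log (1 - p ^ (k + 1)) := by
    filter_upwards [Ioo_mem_nhds (show -r < q by linarith) hqr] with p hp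
    exact aux_log_tprod (abs_lt.mpr ⟨hp.1, hp.2⟩).le hr0.le hr1
  have hderiv : deriv (fun p : ℝ => Real.log (∏' k : ℕ, (1 - p ^ (k + 1)))) q
      = ∑' n : ℕ, (-(((n:ℝ)+1) * q ^ n)) / (1 - q ^ (n+1)) := by
    rw [hEq.deriv_eq, (aux_deriv_sum hq0 hq1).deriv]
  rw [hderiv, ← tsum_mul_left]
  have hne : ∀ n : ℕ, (1 - q ^ (n+1)) ≠ 0 := fun n =>
    ne_of_gt (aux_pos (le_of_eq (abs_of_pos hq0)) hq0.le hq1 n)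
  -- termwise identities
  have hL : ∀ n : ℕ, 1 / Real.sinh (((n:ℝ)+1)*x) ^ 2 = 4 * (q ^ (n+1) / (1 - q ^ (n+1)) ^ 2) := by
    intro n
    have hA : (0:ℝ) < ((n:ℝ)+1)*x := by positivity
    set u : ℝ := Real.exp (-(((n:ℝ)+1)*x)) with hu
    have hu0 : 0 < u := Real.exp_pos _
    have hu1 : u < 1 := Real.exp_lt_one_iff.mpr (by linarith)
    have hqn : q ^ (n+1) = u ^ 2 := by
      rw [hq, hu, ← Real.exp_nat_mul, ← Real.exp_nat_mul]
      congr 1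
      push_cast
      ring
    have h1 : Real.exp (((n:ℝ)+1)*x) = u⁻¹ := by rw [hu, Real.exp_neg, inv_inv]
    rw [Real.sinh_eq, h1, ← hu, hqn]
    have h2 : 1 - u ^ 2 ≠ 0 := by nlinarith
    have key : (u⁻¹ - u) / 2 = (1 - u ^ 2) / (2 * u) := by
      field_simp
    rw [key, div_pow, one_div_div]
    ring
  have hR : ∀ n : ℕ, -4 * q * ((-(((n:ℝ)+1) * q ^ n)) / (1 - q ^ (n+1)))
      = 4 * (((n:ℝ)+1) * q ^ (n+1) / (1 - q ^ (n+1))) := by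
    intro n
    rw [← mul_div_assoc, ← mul_div_assoc]
    congr 1
    ring
  have hF := aux_summable_F hq0 hq1
  calc ∑' n : ℕ, 1 / Real.sinh (((n:ℝ)+1)*x) ^ 2
      = ∑' n : ℕ, 4 * (q ^ (n+1) / (1 - q ^ (n+1)) ^ 2) := tsum_congr hL
    _ = 4 * ∑' n : ℕ, q ^ (n+1) / (1 - q ^ (n+1)) ^ 2 := tsum_mul_left
    _ = 4 * ∑' m : ℕ, ∑' d : ℕ, ((d:ℝ)+1) * q ^ ((m+1)*(d+1)) := by
        congr 1
        exact tsum_congr fun m => ((aux_inner1 hq0 hq1 m).tsum_eq).symm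
    _ = 4 * ∑' d : ℕ, ∑' m : ℕ, ((d:ℝ)+1) * q ^ ((m+1)*(d+1)) := by
        congr 1
        exact (Summable.tsum_comm hF).symm
    _ = 4 * ∑' k : ℕ, ((k:ℝ)+1) * q ^ (k+1) / (1 - q ^ (k+1)) := by
        congr 1
        exact tsum_congr fun k => (aux_inner2 hq0 hq1 k).tsum_eq
    _ = ∑' k : ℕ, 4 * (((k:ℝ)+1) * q ^ (k+1) / (1 - q ^ (k+1))) := tsum_mul_left.symm
    _ = ∑' n : ℕ, -4 * q * ((-(((n:ℝ)+1) * q ^ n)) / (1 - q ^ (n+1))) :=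
        tsum_congr fun n => (hR n).symm
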